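/- Let G be a positive definite real χ×χ matrix such that G is a convex combination G = Σ_σ p_σ G_σ of matrices G_σ each satisfying: G_σ is positive definite, 0 ≤ (G_σ)_{ij} ≤ 1 with (G_σ)_{ii} = 1, and (G_σ⁻¹)_{ij} ≤ 0 for i ≠ j. Then eᵀ G⁻¹ e ≤ χ, where e is the all-ones vector. -/

import Mathlib

open scoped BigOperators
open Matrix

section Aux

variable {χ : ℕ}

lemma aux_inv_sum_le (A : Matrix (Fin χ) (Fin χ) ℝ) (hA : A.PosDef)
    (hentry : ∀ i j, 0 ≤ A i j ∧ A i j ≤ 1) (hdiag : ∀ i, A i i = 1)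
    (hinvoff : ∀ i j, i ≠ j → A⁻¹ i j ≤ 0) :
    ∑ i, ∑ j, A⁻¹ i j ≤ (χ : ℝ) := by
  have hinv : A⁻¹ * A = 1 := Matrix.nonsing_inv_mul A hA.det_pos.ne'.isUnit
  have hrow : ∀ i, ∑ j, A⁻¹ i j ≤ 1 := by
    intro i
    have h1 : ∑ j, A⁻¹ i j * A j i = 1 := by
      have := congrArg (fun M => M i i) hinv
      simpa [Matrix.mul_apply, Matrix.one_apply] using this
    calc ∑ j, A⁻¹ i j ≤ ∑ j, A⁻¹ i j * A j i := by
          apply Finset.sum_le_sum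
          intro j _
          by_cases hij : i = j
          · subst hij; simp [hdiag]
          · have h0 := hinvoff i j hij
            have h2 := (hentry j i).2
            nlinarith
      _ = 1 := h1
  calc ∑ i, ∑ j, A⁻¹ i j ≤ ∑ i : Fin χ, (1:ℝ) := Finset.sum_le_sum fun i _ => hrow i
    _ = χ := by simp

lemma aux_quad_le (A : Matrix (Fin χ) (Fin χ) ℝ) (hA : A.PosDef) (x e : Fin χ → ℝ) :
    2 * (x ⬝ᵥ e) - x ⬝ᵥ A *ᵥ x ≤ e ⬝ᵥ A⁻¹ *ᵥ e := by
  have hU : IsUnit A.det := hA.det_pos.ne'.isUnit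
  have hAI : A * A⁻¹ = 1 := Matrix.mul_nonsing_inv A hU
  have hsym : Aᵀ = A := hA.isHermitian
  set y := x - A⁻¹ *ᵥ e with hy
  have h0 : 0 ≤ y ⬝ᵥ A *ᵥ y := by
    simpa using hA.posSemidef.dotProduct_mulVec_nonneg y
  have hAe : A *ᵥ (A⁻¹ *ᵥ e) = e := by
    rw [Matrix.mulVec_mulVec, hAI, Matrix.one_mulVec]
  have hcross : (A⁻¹ *ᵥ e) ⬝ᵥ A *ᵥ x = x ⬝ᵥ e := by
    rw [Matrix.dotProduct_mulVec, ← Matrix.mulVec_transpose, hsym, hAe,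
      dotProduct_comm]
  have hexp : y ⬝ᵥ A *ᵥ y
      = x ⬝ᵥ A *ᵥ x - x ⬝ᵥ e - x ⬝ᵥ e + e ⬝ᵥ A⁻¹ *ᵥ e := by
    rw [hy, Matrix.mulVec_sub, sub_dotProduct, dotProduct_sub,
      dotProduct_sub, hAe, hcross, dotProduct_comm (A⁻¹ *ᵥ e) e]
    ring
  linarith [h0, hexp ▸ h0]

end Aux

/-- If a positive definite matrix `G` is a convex combination of positive definite
matrices with entries in `[0,1]`, unit diagonal, and inverse with nonpositive
off-diagonal entries, then `eᵀ G⁻¹ e ≤ χ`. -/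
theorem convex_mixture_inverse_bound {ι : Type*} [Fintype ι] (χ : ℕ)
    (p : ι → ℝ) (hp : ∀ σ, 0 ≤ p σ) (hp1 : ∑ σ, p σ = 1)
    (Gm : ι → Matrix (Fin χ) (Fin χ) ℝ)
    (hpd : ∀ σ, (Gm σ).PosDef)
    (hentry : ∀ σ i j, 0 ≤ Gm σ i j ∧ Gm σ i j ≤ 1)
    (hdiag : ∀ σ i, Gm σ i i = 1)
    (hinvoff : ∀ σ, ∀ i j, i ≠ j → (Gm σ)⁻¹ i j ≤ 0)
    (G : Matrix (Fin χ) (Fin χ) ℝ) (hG : G.PosDef)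
    (hmix : G = ∑ σ, p σ • Gm σ) :
    ∑ i, ∑ j, G⁻¹ i j ≤ (χ : ℝ) := by
  set e : Fin χ → ℝ := fun _ => 1 with he
  have hsum_eq : ∀ (M : Matrix (Fin χ) (Fin χ) ℝ),
      ∑ i, ∑ j, M i j = e ⬝ᵥ M *ᵥ e := by
    intro M
    simp [dotProduct, Matrix.mulVec, he]
  set x : Fin χ → ℝ := G⁻¹ *ᵥ e with hx
  have hGI : G * G⁻¹ = 1 := Matrix.mul_nonsing_inv G hG.det_pos.ne'.isUnit
  have hGx : G *ᵥ x = e := by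
    rw [hx, Matrix.mulVec_mulVec, hGI, Matrix.one_mulVec]
  have hEq : e ⬝ᵥ G⁻¹ *ᵥ e = 2 * (x ⬝ᵥ e) - x ⬝ᵥ G *ᵥ x := by
    have h1 : x ⬝ᵥ G *ᵥ x = x ⬝ᵥ e := by rw [hGx]
    have h2 : x ⬝ᵥ e = e ⬝ᵥ G⁻¹ *ᵥ e := by rw [hx, dotProduct_comm]
    linarith
  have hmv : (∑ σ, p σ • Gm σ) *ᵥ x = ∑ σ, p σ • (Gm σ *ᵥ x) := by
    rw [show (∑ σ, p σ • Gm σ) *ᵥ x = Matrix.mulVec.addMonoidHomLeft x (∑ σ, p σ • Gm σ) from rfl,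
      map_sum]
    congr 1
    ext σ i
    simp [Matrix.mulVec.addMonoidHomLeft, Matrix.smul_mulVec]
  have hGmul : x ⬝ᵥ G *ᵥ x = ∑ σ, p σ * (x ⬝ᵥ Gm σ *ᵥ x) := by
    rw [hmix, hmv, dotProduct, ]
    simp only [Finset.sum_apply, Pi.smul_apply, smul_eq_mul, Finset.mul_sum, Finset.sum_mul]
    rw [Finset.sum_comm]
    apply Finset.sum_congr rfl
    intro σ _
    rw [dotProduct, Finset.mul_sum]
    apply Finset.sum_congr rfl
    intro i _
    ring
  have hsplit : ∑ σ, p σ * (2 * (x ⬝ᵥ e) - x ⬝ᵥ Gm σ *ᵥ x)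
      = 2 * (x ⬝ᵥ e) - x ⬝ᵥ G *ᵥ x := by
    rw [hGmul]
    simp only [mul_sub]
    rw [Finset.sum_sub_distrib, ← Finset.sum_mul, hp1, one_mul]
  have hbound : ∀ σ, 2 * (x ⬝ᵥ e) - x ⬝ᵥ Gm σ *ᵥ x ≤ (χ : ℝ) := by
    intro σ
    calc 2 * (x ⬝ᵥ e) - x ⬝ᵥ Gm σ *ᵥ x ≤ e ⬝ᵥ (Gm σ)⁻¹ *ᵥ e :=
          aux_quad_le (Gm σ) (hpd σ) x e
      _ = ∑ i, ∑ j, (Gm σ)⁻¹ i j := (hsum_eq _).symm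
      _ ≤ (χ : ℝ) := aux_inv_sum_le (Gm σ) (hpd σ) (hentry σ) (hdiag σ) (hinvoff σ)
  calc ∑ i, ∑ j, G⁻¹ i j = e ⬝ᵥ G⁻¹ *ᵥ e := hsum_eq _
    _ = ∑ σ, p σ * (2 * (x ⬝ᵥ e) - x ⬝ᵥ Gm σ *ᵥ x) := by rw [hEq, hsplit]
    _ ≤ ∑ σ, p σ * (χ : ℝ) := Finset.sum_le_sum fun σ _ =>
          mul_le_mul_of_nonneg_left (hbound σ) (hp σ)
    _ = (χ : ℝ) := by rw [← Finset.sum_mul, hp1, one_mul]
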